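/- Exchange argument for non-monotone power schedules: if R is strictly concave and P_k > P_{k+1} in a feasible schedule for the energy-causality-constrained problem, then replacing both by their average P̄ = (P_k + P_{k+1})/2 remains feasible (energy causality is preserved since the cumulative consumption at every prefix weakly decreases or stays equal at times ≥ k+1 and the constraint at k involved the larger P_k) and strictly increases R(P_k) + R(P_{k+1}) < 2R(P̄). -/

import Mathlib

open Finset in
/-- Exchange argument: if a feasible schedule has `P (k+1) < P k`, replacing
both by their average `P̄ = (P k + P (k+1)) / 2` preserves feasibility of the
energy-causality constraints and strictly increases `R (P k) + R (P (k+1))`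
when `R` is strictly concave. -/
theorem stmt_17 (K : ℕ) (τ B0 : ℝ) (hτ : 0 < τ) (U : ℕ → ℝ)
    (R : ℝ → ℝ) (hconc : StrictConcaveOn ℝ (Set.Ici (0 : ℝ)) R)
    (P : ℕ → ℝ) (k : ℕ) (hk1 : 1 ≤ k) (hkK : k + 1 ≤ K)
    (hdec : P (k + 1) < P k)
    (hfeas : (∀ j ∈ Finset.Icc 1 K, 0 ≤ P j) ∧
      ∀ j ∈ Finset.Icc 1 K, ∑ i ∈ Finset.Icc 1 j, (P i - U i) * τ ≤ B0) :
    (∀ j ∈ Finset.Icc 1 K,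
        0 ≤ (fun m => if m = k ∨ m = k + 1 then (P k + P (k + 1)) / 2 else P m) j) ∧
    (∀ j ∈ Finset.Icc 1 K,
        ∑ i ∈ Finset.Icc 1 j,
          ((fun m => if m = k ∨ m = k + 1 then (P k + P (k + 1)) / 2 else P m) i
            - U i) * τ ≤ B0) ∧
    R (P k) + R (P (k + 1)) < 2 * R ((P k + P (k + 1)) / 2) := by
  obtain ⟨hpos, hsum⟩ := hfeas
  have hkmem : k ∈ Finset.Icc 1 K := Finset.mem_Icc.2 ⟨hk1, by omega⟩
  have hk1mem : k + 1 ∈ Finset.Icc 1 K := Finset.mem_Icc.2 ⟨by omega, hkK⟩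
  have hPk : 0 ≤ P k := hpos k hkmem
  have hPk1 : 0 ≤ P (k + 1) := hpos (k + 1) hk1mem
  set Q : ℕ → ℝ := fun m => if m = k ∨ m = k + 1 then (P k + P (k + 1)) / 2 else P m
    with hQ
  refine ⟨?_, ?_, ?_⟩
  · intro j hj
    simp only [hQ]
    split
    · linarith
    · exact hpos j hj
  · intro j hj
    refine le_trans ?_ (hsum j hj)
    have hsplit : ∀ i, (Q i - U i) * τ = (P i - U i) * τ + (Q i - P i) * τ := by
      intro i; ring
    rw [Finset.sum_congr rfl (fun i _ => hsplit i), Finset.sum_add_distrib]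
    have hzero : ∀ i, i ≠ k → i ≠ k + 1 → (Q i - P i) * τ = 0 := by
      intro i h1 h2
      simp [hQ, h1, h2]
    have hrest : ∑ i ∈ Finset.Icc 1 j, (Q i - P i) * τ ≤ 0 := by
      rcases lt_trichotomy j k with hj' | hj' | hj'
      · rw [Finset.sum_eq_zero]
        intro i hi
        have := Finset.mem_Icc.1 hi
        exact hzero i (by omega) (by omega)
      · subst hj'
        rw [Finset.sum_eq_single j]
        · have : Q j = (P j + P (j + 1)) / 2 := by simp [hQ]
          rw [this]
          apply mul_nonpos_of_nonpos_of_nonneg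
          · linarith
          · exact hτ.le
        · intro i hi hij
          have := Finset.mem_Icc.1 hi
          exact hzero i hij (by omega)
        · intro h
          exact absurd (Finset.mem_Icc.2 ⟨hk1, le_refl _⟩) h
      · have hsub : ({k, k + 1} : Finset ℕ) ⊆ Finset.Icc 1 j := by
          intro i hi
          simp only [Finset.mem_insert, Finset.mem_singleton] at hi
          rcases hi with rfl | rfl <;> exact Finset.mem_Icc.2 ⟨by omega, by omega⟩
        rw [← Finset.sum_subset hsub]
        · rw [Finset.sum_pair (by omega)]
          have h1 : Q k = (P k + P (k + 1)) / 2 := by simp [hQ]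
          have h2 : Q (k + 1) = (P k + P (k + 1)) / 2 := by simp [hQ]
          rw [h1, h2]; ring_nf; rfl
        · intro i hi hni
          simp only [Finset.mem_insert, Finset.mem_singleton, not_or] at hni
          exact hzero i hni.1 hni.2
    linarith
  · have hne : P (k + 1) ≠ P k := ne_of_lt hdec
    have := hconc.2 (Set.mem_Ici.2 hPk1) (Set.mem_Ici.2 hPk) hne
      (by norm_num : (0:ℝ) < 1/2) (by norm_num : (0:ℝ) < 1/2) (by norm_num)
    simp only [smul_eq_mul] at this
    have heq : (1/2 : ℝ) * P (k + 1) + (1/2) * P k = (P k + P (k + 1)) / 2 := by ring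
    rw [heq] at this
    linarith
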